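/- For every (y, p) ∈ ℝ^m × ℝ^m, the Fréchet derivative of the function s at (y, p) applied to the vector v(y, p) is zero; that is, the vector field v is tangent to the level sets of s. Explicitly: Σ_{j=1}^m [(S + y_j)p_j + Q·y_j − S·y_j²] = Σ_{j=1}^m y_j p_j + S·(Σ_{j=1}^m p_j), where S = Σ_k y_k and Q = Σ_k y_k². -/

import Mathlib

/-- The vector field `v` of the first-order system is tangent to
the level sets of `s`: at every `(y, p)`, `Ds(y,p)(v(y,p)) = 0`; explicitly,
`Σⱼ [(S + yⱼ)pⱼ + Q·yⱼ − S·yⱼ²] = Σⱼ yⱼ pⱼ + S·(Σⱼ pⱼ)`. -/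
theorem stmt_11 (m : ℕ) (hm : 1 ≤ m)
    (v : (Fin m → ℝ) × (Fin m → ℝ) → (Fin m → ℝ) × (Fin m → ℝ))
    (hv : ∀ yp : (Fin m → ℝ) × (Fin m → ℝ), v yp = (yp.2, fun j =>
      ((∑ k, yp.1 k) + yp.1 j) * yp.2 j + (∑ k, (yp.1 k) ^ 2) * yp.1 j
        - (∑ k, yp.1 k) * (yp.1 j) ^ 2))
    (s : (Fin m → ℝ) × (Fin m → ℝ) → ℝ)
    (hs : ∀ yp : (Fin m → ℝ) × (Fin m → ℝ),
      s yp = 2 * (∑ k, yp.2 k) - (∑ k, (yp.1 k) ^ 2) - (∑ k, yp.1 k) ^ 2) :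
    ∀ yp : (Fin m → ℝ) × (Fin m → ℝ),
      fderiv ℝ s yp (v yp) = 0 ∧
      (∑ j, (((∑ k, yp.1 k) + yp.1 j) * yp.2 j + (∑ k, (yp.1 k) ^ 2) * yp.1 j
          - (∑ k, yp.1 k) * (yp.1 j) ^ 2))
        = (∑ j, yp.1 j * yp.2 j) + (∑ k, yp.1 k) * (∑ j, yp.2 j) := by
  have hse : s = fun yp => 2 * (∑ k, yp.2 k) - (∑ k, (yp.1 k) ^ 2) - (∑ k, yp.1 k) ^ 2 :=
    funext hs
  rintro ⟨y, p⟩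
  -- the algebraic identity
  have key : (∑ j, (((∑ k, y k) + y j) * p j + (∑ k, (y k) ^ 2) * y j
          - (∑ k, y k) * (y j) ^ 2))
        = (∑ j, y j * p j) + (∑ k, y k) * (∑ j, p j) := by
    have h1 : ∀ j : Fin m, ((∑ k, y k) + y j) * p j + (∑ k, (y k) ^ 2) * y j
          - (∑ k, y k) * (y j) ^ 2
        = ((∑ k, y k) * p j + y j * p j + (∑ k, (y k) ^ 2) * y j)
            - (∑ k, y k) * (y j) ^ 2 := by
      intro j; ring
    rw [Finset.sum_congr rfl fun j _ => h1 j, Finset.sum_sub_distrib,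
      Finset.sum_add_distrib, Finset.sum_add_distrib, ← Finset.mul_sum,
      ← Finset.mul_sum, ← Finset.mul_sum]
    ring
  refine ⟨?_, key⟩
  -- linear maps yp ↦ yp.1 k and yp ↦ yp.2 k
  set L1 : Fin m → ((Fin m → ℝ) × (Fin m → ℝ)) →L[ℝ] ℝ := fun k =>
    (ContinuousLinearMap.proj k).comp (ContinuousLinearMap.fst ℝ (Fin m → ℝ) (Fin m → ℝ))
    with hL1def
  set L2 : Fin m → ((Fin m → ℝ) × (Fin m → ℝ)) →L[ℝ] ℝ := fun k =>
    (ContinuousLinearMap.proj k).comp (ContinuousLinearMap.snd ℝ (Fin m → ℝ) (Fin m → ℝ))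
    with hL2def
  have hL1 : ∀ k, HasFDerivAt (fun yp : (Fin m → ℝ) × (Fin m → ℝ) => yp.1 k) (L1 k) (y, p) :=
    fun k => (L1 k).hasFDerivAt
  have hL2 : ∀ k, HasFDerivAt (fun yp : (Fin m → ℝ) × (Fin m → ℝ) => yp.2 k) (L2 k) (y, p) :=
    fun k => (L2 k).hasFDerivAt
  have hsum1 : HasFDerivAt (fun yp : (Fin m → ℝ) × (Fin m → ℝ) => ∑ k, yp.1 k)
      (∑ k, L1 k) (y, p) := HasFDerivAt.fun_sum fun k _ => hL1 k
  have hsum2 : HasFDerivAt (fun yp : (Fin m → ℝ) × (Fin m → ℝ) => ∑ k, yp.2 k)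
      (∑ k, L2 k) (y, p) := HasFDerivAt.fun_sum fun k _ => hL2 k
  have hsq : ∀ k, HasFDerivAt (fun yp : (Fin m → ℝ) × (Fin m → ℝ) => yp.1 k ^ 2)
      (y k • L1 k + y k • L1 k) (y, p) := by
    intro k
    simpa [pow_two] using (hL1 k).fun_mul (hL1 k)
  have hQ : HasFDerivAt (fun yp : (Fin m → ℝ) × (Fin m → ℝ) => ∑ k, yp.1 k ^ 2)
      (∑ k, (y k • L1 k + y k • L1 k)) (y, p) := HasFDerivAt.fun_sum fun k _ => hsq k
  have hS2 : HasFDerivAt (fun yp : (Fin m → ℝ) × (Fin m → ℝ) => (∑ k, yp.1 k) ^ 2)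
      ((∑ k, y k) • (∑ k, L1 k) + (∑ k, y k) • (∑ k, L1 k)) (y, p) := by
    simpa [pow_two] using hsum1.fun_mul hsum1
  have hD : HasFDerivAt s
      ((2 : ℝ) • (∑ k, L2 k) - (∑ k, (y k • L1 k + y k • L1 k))
        - ((∑ k, y k) • (∑ k, L1 k) + (∑ k, y k) • (∑ k, L1 k))) (y, p) := by
    rw [hse]
    exact ((hsum2.const_mul (2 : ℝ)).sub hQ).sub hS2
  rw [hD.fderiv, hv]
  simp only [ContinuousLinearMap.sub_apply, ContinuousLinearMap.add_apply,
    ContinuousLinearMap.smul_apply, ContinuousLinearMap.sum_apply,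
    ContinuousLinearMap.coe_comp', Function.comp_apply,
    ContinuousLinearMap.proj_apply, ContinuousLinearMap.coe_fst',
    ContinuousLinearMap.coe_snd', hL1def, hL2def, smul_eq_mul]
  rw [key, Finset.sum_add_distrib]
  ring
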